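/- For unit vectors e_x = cos(μ_x/2)·v₀ + sin(μ_x/2)·v₁ in a Hilbert space with orthonormal v₀, v₁, where μ_x = (x − (X−1)/2)·θ for x = 0,…,X−1, the sum of pairwise overlaps satisfies Σ_{x,x'=0}^{X−1} |⟨e_x, e_{x'}⟩|² = (1/2)(X² + (sin(Xθ/2)/sin(θ/2))²) for θ ∈ (0, π/X). -/

import Mathlib

open Real

lemma aux_normSq_exp_sub_one (t : ℝ) :
    Complex.normSq (Complex.exp (t * Complex.I) - 1) = 4 * Real.sin (t/2) ^ 2 := by
  rw [Complex.normSq_apply]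
  simp only [Complex.sub_re, Complex.sub_im, Complex.one_re, Complex.one_im,
    Complex.exp_ofReal_mul_I_re, Complex.exp_ofReal_mul_I_im]
  have h2 := Real.cos_sq (t/2)
  have h3 := Real.sin_sq_add_cos_sq (t/2)
  have ht : 2 * (t/2) = t := by ring
  rw [ht] at h2
  nlinarith [Real.sin_sq_add_cos_sq t]

lemma aux_cos_double_sum (X : ℕ) (θ : ℝ) :
    ∑ x ∈ Finset.range X, ∑ x' ∈ Finset.range X, Real.cos (((x:ℝ) - x') * θ)
      = Complex.normSq (∑ x ∈ Finset.range X, Complex.exp ((x:ℝ) * θ * Complex.I)) := by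
  set S := ∑ x ∈ Finset.range X, Complex.exp ((x:ℝ) * θ * Complex.I) with hS
  have h1 : (Complex.normSq S : ℂ) = S * (starRingEnd ℂ) S := (Complex.mul_conj S).symm
  have h2 : S * (starRingEnd ℂ) S
      = ∑ x ∈ Finset.range X, ∑ x' ∈ Finset.range X,
          Complex.exp ((((x:ℝ) - x') * θ : ℝ) * Complex.I) := by
    rw [hS, map_sum, Finset.sum_mul_sum]
    refine Finset.sum_congr rfl fun x _ => Finset.sum_congr rfl fun x' _ => ?_
    rw [← Complex.exp_conj, ← Complex.exp_add]
    congr 1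
    simp [Complex.ext_iff]
    ring
  have h3 := congrArg Complex.re (h1.trans h2)
  rw [Complex.ofReal_re] at h3
  rw [h3, Complex.re_sum]
  refine Finset.sum_congr rfl fun x _ => ?_
  rw [Complex.re_sum]
  refine Finset.sum_congr rfl fun x' _ => ?_
  rw [Complex.exp_ofReal_mul_I_re]

lemma aux_geom_normSq (X : ℕ) (θ : ℝ) (hθ : 0 < θ) (hθπ : θ < π) :
    Complex.normSq (∑ x ∈ Finset.range X, Complex.exp ((x:ℝ) * θ * Complex.I))
      = Real.sin (X * θ / 2) ^ 2 / Real.sin (θ / 2) ^ 2 := by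
  have hne : Complex.exp (θ * Complex.I) ≠ 1 := by
    intro h
    have := congrArg Complex.im h
    rw [Complex.exp_ofReal_mul_I_im, Complex.one_im] at this
    exact absurd this (ne_of_gt (Real.sin_pos_of_pos_of_lt_pi hθ hθπ))
  have hpow : ∀ x : ℕ, Complex.exp ((x:ℝ) * θ * Complex.I) = Complex.exp (θ * Complex.I) ^ x := by
    intro x
    rw [← Complex.exp_nat_mul]
    congr 1
    push_cast; ring
  have hgeom : ∑ x ∈ Finset.range X, Complex.exp ((x:ℝ) * θ * Complex.I)
      = (Complex.exp ((X:ℝ) * θ * Complex.I) - 1) / (Complex.exp (θ * Complex.I) - 1) := by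
    simp_rw [hpow]
    rw [geom_sum_eq hne, ← hpow X]
  rw [hgeom, Complex.normSq_div,
    show ((X:ℝ):ℂ)*(θ:ℂ) = (((X:ℝ)*θ:ℝ):ℂ) by push_cast; ring,
    aux_normSq_exp_sub_one, aux_normSq_exp_sub_one]
  rw [mul_div_mul_left _ _ (by norm_num : (4:ℝ) ≠ 0)]

lemma aux_inner {E : Type*} [NormedAddCommGroup E] [InnerProductSpace ℂ E]
    (v₀ v₁ : E) (h₀ : ‖v₀‖ = 1) (h₁ : ‖v₁‖ = 1) (horth : (inner ℂ v₀ v₁ : ℂ) = 0)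
    (a b : ℝ) :
    (inner ℂ ((Real.cos a : ℂ) • v₀ + (Real.sin a : ℂ) • v₁)
      ((Real.cos b : ℂ) • v₀ + (Real.sin b : ℂ) • v₁) : ℂ) = (Real.cos (a - b) : ℂ) := by
  have h00 : (inner ℂ v₀ v₀ : ℂ) = 1 := by
    rw [inner_self_eq_norm_sq_to_K, h₀]; norm_num
  have h11 : (inner ℂ v₁ v₁ : ℂ) = 1 := by
    rw [inner_self_eq_norm_sq_to_K, h₁]; norm_num
  have h10 : (inner ℂ v₁ v₀ : ℂ) = 0 := by
    rw [← inner_conj_symm, horth, map_zero]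
  simp only [inner_add_left, inner_add_right, inner_smul_left, inner_smul_right,
    h00, h11, h10, horth, mul_zero, mul_one, zero_add, add_zero, Complex.conj_ofReal]
  rw [Real.cos_sub]
  push_cast
  ring

/-- For the equally spaced family of unit vectors, the sum of pairwise squared overlaps equals
`(X² + (sin(Xθ/2)/sin(θ/2))²)/2`. -/
theorem stmt1 {E : Type*} [NormedAddCommGroup E] [InnerProductSpace ℂ E]
    (v₀ v₁ : E) (h₀ : ‖v₀‖ = 1) (h₁ : ‖v₁‖ = 1) (horth : (inner ℂ v₀ v₁ : ℂ) = 0)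
    (X : ℕ) (hX : 2 ≤ X) (θ : ℝ) (hθ : 0 < θ) (hθ' : θ < π / X)
    (μ : ℕ → ℝ) (hμ : ∀ x, μ x = ((x : ℝ) - ((X : ℝ) - 1) / 2) * θ)
    (e : ℕ → E)
    (he : ∀ x, e x = (Real.cos (μ x / 2) : ℂ) • v₀ + (Real.sin (μ x / 2) : ℂ) • v₁) :
    ∑ x ∈ Finset.range X, ∑ x' ∈ Finset.range X, ‖(inner ℂ (e x) (e x') : ℂ)‖ ^ 2 =
      ((X : ℝ) ^ 2 + (Real.sin (X * θ / 2) / Real.sin (θ / 2)) ^ 2) / 2 := by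
  have hXpos : (0:ℝ) < X := by positivity
  have hθπ : θ < π := lt_of_lt_of_le hθ' (div_le_self Real.pi_pos.le (by exact_mod_cast Nat.one_le_of_lt hX))
  have key : ∀ x x' : ℕ, ‖(inner ℂ (e x) (e x') : ℂ)‖ ^ 2
      = 1/2 + Real.cos (((x:ℝ) - x') * θ) / 2 := by
    intro x x'
    rw [he x, he x', aux_inner v₀ v₁ h₀ h₁ horth, Complex.norm_real, Real.norm_eq_abs, sq_abs]
    have hd : μ x / 2 - μ x' / 2 = (((x:ℝ) - x') * θ) / 2 := by rw [hμ, hμ]; ring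
    rw [hd, Real.cos_sq]
    congr 2
    ring
  simp_rw [key]
  rw [Finset.sum_congr rfl fun x _ => Finset.sum_add_distrib, Finset.sum_add_distrib]
  have h1 : ∑ _x ∈ Finset.range X, ∑ _x' ∈ Finset.range X, (1/2 : ℝ) = (X:ℝ)^2 / 2 := by
    simp [Finset.sum_const, Finset.card_range]
    ring
  have h2 : ∑ x ∈ Finset.range X, ∑ x' ∈ Finset.range X, Real.cos (((x:ℝ) - x') * θ) / 2
      = (Real.sin (X * θ / 2) / Real.sin (θ / 2)) ^ 2 / 2 := by
    rw [show ∀ (f : ℕ → ℕ → ℝ), ∑ x ∈ Finset.range X, ∑ x' ∈ Finset.range X, f x x' / 2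
        = (∑ x ∈ Finset.range X, ∑ x' ∈ Finset.range X, f x x') / 2 from
        fun f => by rw [Finset.sum_div]; exact Finset.sum_congr rfl fun x _ => by rw [Finset.sum_div]]
    rw [aux_cos_double_sum, aux_geom_normSq X θ hθ hθπ, div_pow]
  rw [h1, h2]
  ring
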